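/- Under the hypotheses of the independent-errors lemma, if additionally each Ei acts non-trivially on a set Si of size k, then Pr[(El ∘ ⋯ ∘ E1)(x) ≠ x] ≥ 1 − (1 − 2^{-(k-1)})^l for x uniform on {0,1}^n. -/

import Mathlib

open Finset

lemma indep_card {n : ℕ} (A C : Finset (Fin n → Bool)) (s t : Finset (Fin n))
    (hst : Disjoint s t)
    (hA : ∀ x ∈ A, ∀ y : Fin n → Bool, (∀ m ∈ s, y m = x m) → y ∈ A)
    (hC : ∀ x ∈ C, ∀ y : Fin n → Bool, (∀ m ∈ t, y m = x m) → y ∈ C) :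
    (A ∩ C).card * 2 ^ n = A.card * C.card := by
  have hcu : (Finset.univ : Finset (Fin n → Bool)).card = 2 ^ n := by
    simp [Finset.card_univ]
  have key : ((A ∩ C) ×ˢ (Finset.univ : Finset (Fin n → Bool))).card = (A ×ˢ C).card := by
    refine Finset.card_bij' (fun p _ => ((fun m => if m ∈ s then p.1 m else p.2 m),
        (fun m => if m ∈ s then p.2 m else p.1 m)))
      (fun p _ => ((fun m => if m ∈ s then p.1 m else p.2 m),
        (fun m => if m ∈ s then p.2 m else p.1 m))) ?_ ?_ ?_ ?_
    · rintro ⟨z, w⟩ hp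
      simp only [Finset.mem_product, Finset.mem_inter, Finset.mem_univ, and_true] at hp
      simp only [Finset.mem_product]
      constructor
      · exact hA z hp.1 _ (fun m hm => by simp [hm])
      · refine hC z hp.2 _ (fun m hm => ?_)
        have : m ∉ s := fun h => (hst.forall_ne_finset h hm) rfl
        simp [this]
    · rintro ⟨a, c⟩ hp
      simp only [Finset.mem_product] at hp
      simp only [Finset.mem_product, Finset.mem_inter, Finset.mem_univ, and_true]
      refine ⟨hA a hp.1 _ (fun m hm => by simp [hm]), ?_⟩
      refine hC c hp.2 _ (fun m hm => ?_)
      have : m ∉ s := fun h => (hst.forall_ne_finset h hm) rfl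
      simp [this]
    · rintro ⟨z, w⟩ _
      refine Prod.ext ?_ ?_ <;> funext m <;> by_cases h : m ∈ s <;> simp [h]
    · rintro ⟨a, c⟩ _
      refine Prod.ext ?_ ?_ <;> funext m <;> by_cases h : m ∈ s <;> simp [h]
  simpa [Finset.card_product, hcu] using key
lemma single_bound {n k : ℕ} (e : Equiv.Perm (Fin n → Bool)) (s : Finset (Fin n))
    (hs : s.card = k)
    (hfix : ∀ x : Fin n → Bool, ∀ m ∉ s, e x m = x m)
    (hdep : ∀ x y : Fin n → Bool, (∀ m ∈ s, x m = y m) → ∀ m ∈ s, e x m = e y m)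
    (hne : e ≠ 1) :
    ((Finset.univ.filter fun x : Fin n → Bool => e x = x).card : ℝ) ≤
      (1 - ((2 : ℝ) ^ (k - 1))⁻¹) * 2 ^ n := by
  -- a moved point
  obtain ⟨x₀, hx₀⟩ : ∃ x, e x ≠ x := by
    by_contra h
    push_neg at h
    exact hne (Equiv.ext h)
  set x₁ := e x₀ with hx₁def
  have hx₁ : e x₁ ≠ x₁ := by
    intro h
    exact hx₀ (e.injective (by rw [h, ← hx₁def]))
  -- k ≥ 1
  have hk1 : 1 ≤ k := by
    rcases Nat.eq_zero_or_pos k with h0 | h; swap; · exact h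
    exfalso
    apply hne
    apply Equiv.ext
    intro x
    funext m
    exact hfix x m (by simp [Finset.card_eq_zero.mp (hs.trans h0)])
  have hkn : k ≤ n := by
    have := Finset.card_le_univ s
    simpa [hs] using this
  -- determinedness of the moved-set
  have moved : ∀ z : Fin n → Bool, e z ≠ z → ∀ y : Fin n → Bool,
      (∀ m ∈ s, y m = z m) → e y ≠ y := by
    intro z hz y hy hey
    apply hz
    funext m
    by_cases hm : m ∈ s
    · have h1 : e z m = e y m := hdep z y (fun m hm => (hy m hm).symm) m hm
      rw [h1, hey]
      exact (hy m hm)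
    · exact hfix z m hm
  -- the two cylinders
  set D : Finset (Fin n → Bool) :=
    Fintype.piFinset (fun m => if m ∈ s then {x₀ m} else Finset.univ) with hD
  set D' : Finset (Fin n → Bool) :=
    Fintype.piFinset (fun m => if m ∈ s then {x₁ m} else Finset.univ) with hD'
  have memD : ∀ y : Fin n → Bool, y ∈ D ↔ ∀ m ∈ s, y m = x₀ m := by
    intro y
    simp only [hD, Fintype.mem_piFinset]
    constructor
    · intro h m hm; have := h m; simpa [hm] using this
    · intro h m; by_cases hm : m ∈ s <;> simp [hm, h]
  have memD' : ∀ y : Fin n → Bool, y ∈ D' ↔ ∀ m ∈ s, y m = x₁ m := by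
    intro y
    simp only [hD', Fintype.mem_piFinset]
    constructor
    · intro h m hm; have := h m; simpa [hm] using this
    · intro h m; by_cases hm : m ∈ s <;> simp [hm, h]
  have cardD : D.card = 2 ^ (n - k) := by
    rw [hD, Fintype.card_piFinset]
    have h1 : ∀ i : Fin n, ((if i ∈ s then ({x₀ i} : Finset Bool) else Finset.univ)).card
        = if i ∈ s then 1 else 2 := by
      intro i; by_cases hi : i ∈ s <;> simp [hi]
    rw [Finset.prod_congr rfl (fun i _ => h1 i), Finset.prod_ite]
    have h2 : Finset.univ.filter (fun i : Fin n => i ∈ s) = s := by ext; simp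
    have h3 : Finset.univ.filter (fun i : Fin n => ¬ i ∈ s) = sᶜ := by ext; simp
    rw [h2, h3, Finset.prod_const, Finset.prod_const]
    simp [Finset.card_compl, hs]
  have cardD' : D'.card = 2 ^ (n - k) := by
    rw [hD', Fintype.card_piFinset]
    have h1 : ∀ i : Fin n, ((if i ∈ s then ({x₁ i} : Finset Bool) else Finset.univ)).card
        = if i ∈ s then 1 else 2 := by
      intro i; by_cases hi : i ∈ s <;> simp [hi]
    rw [Finset.prod_congr rfl (fun i _ => h1 i), Finset.prod_ite]
    have h2 : Finset.univ.filter (fun i : Fin n => i ∈ s) = s := by ext; simp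
    have h3 : Finset.univ.filter (fun i : Fin n => ¬ i ∈ s) = sᶜ := by ext; simp
    rw [h2, h3, Finset.prod_const, Finset.prod_const]
    simp [Finset.card_compl, hs]
  -- D and D' disjoint
  have hx01 : ∃ m ∈ s, x₀ m ≠ x₁ m := by
    by_contra h
    push_neg at h
    apply hx₀
    funext m
    by_cases hm : m ∈ s
    · exact (h m hm).symm
    · exact (hfix x₀ m hm)
  obtain ⟨m₀, hm₀s, hm₀⟩ := hx01
  have hDD' : Disjoint D D' := by
    rw [Finset.disjoint_left]
    intro y hy hy'
    exact hm₀ (((memD y).mp hy m₀ hm₀s).symm.trans ((memD' y).mp hy' m₀ hm₀s))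
  -- D ∪ D' ⊆ moved points
  have hsub : D ∪ D' ⊆ Finset.univ.filter fun x : Fin n → Bool => e x ≠ x := by
    intro y hy
    rcases Finset.mem_union.mp hy with hy | hy
    · simp only [Finset.mem_filter, Finset.mem_univ, true_and]
      exact moved x₀ hx₀ y ((memD y).mp hy)
    · simp only [Finset.mem_filter, Finset.mem_univ, true_and]
      exact moved x₁ hx₁ y ((memD' y).mp hy)
  have hcard_ne : 2 * 2 ^ (n - k) ≤ (Finset.univ.filter fun x : Fin n → Bool => e x ≠ x).card := by
    calc 2 * 2 ^ (n - k) = D.card + D'.card := by rw [cardD, cardD']; ring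
    _ = (D ∪ D').card := (Finset.card_union_of_disjoint hDD').symm
    _ ≤ _ := Finset.card_le_card hsub
  -- combine
  have hsplit : (Finset.univ.filter fun x : Fin n → Bool => e x = x).card
      + (Finset.univ.filter fun x : Fin n → Bool => e x ≠ x).card
      = 2 ^ n := by
    rw [Finset.card_filter_add_card_filter_not]
    simp [Finset.card_univ]
  have hpow : ((2 : ℝ) ^ (k - 1))⁻¹ * 2 ^ n = 2 * 2 ^ (n - k) := by
    rw [inv_mul_eq_div, div_eq_iff (by positivity)]
    rw [← pow_succ' (2:ℝ) (n-k)]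
    rw [← pow_add]
    congr 1
    omega
  have h2n : ((Finset.univ.filter fun x : Fin n → Bool => e x = x).card : ℝ)
      + ((Finset.univ.filter fun x : Fin n → Bool => e x ≠ x).card : ℝ) = 2 ^ n := by
    exact_mod_cast hsplit
  have hml : (2 : ℝ) * 2 ^ (n - k) ≤ ((Finset.univ.filter fun x : Fin n → Bool => e x ≠ x).card : ℝ) := by
    exact_mod_cast hcard_ne
  rw [sub_mul, one_mul]
  linarith [hpow]

lemma prod_parts {n : ℕ} : ∀ (l : ℕ) (E : Fin l → Equiv.Perm (Fin n → Bool))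
    (S : Fin l → Finset (Fin n))
    (_ : ∀ i j, i ≠ j → Disjoint (S i) (S j))
    (_ : ∀ i, ∀ x : Fin n → Bool, ∀ m ∉ S i, E i x m = x m)
    (_ : ∀ i, ∀ x y : Fin n → Bool, (∀ m ∈ S i, x m = y m) → ∀ m ∈ S i, E i x m = E i y m)
    (x : Fin n → Bool),
    (∀ i m, m ∈ S i → (List.ofFn E).reverse.prod x m = E i x m) ∧
    (∀ m, (∀ i, m ∉ S i) → (List.ofFn E).reverse.prod x m = x m) := by
  intro l
  induction l with
  | zero =>
    intro E S hdisj hfix hdep x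
    refine ⟨fun i => i.elim0, fun m _ => ?_⟩
    simp
  | succ l ih =>
    intro E S hdisj hfix hdep x
    have hprod : (List.ofFn E).reverse.prod x
        = (List.ofFn (fun j : Fin l => E j.succ)).reverse.prod (E 0 x) := by
      rw [List.ofFn_succ, List.reverse_cons, List.prod_append, List.prod_singleton]
      rfl
    have ihspec := ih (fun j => E j.succ) (fun j => S j.succ)
      (fun i j hij => hdisj i.succ j.succ (fun h => hij (Fin.succ_injective _ h)))
      (fun i => hfix i.succ) (fun i => hdep i.succ) (E 0 x)
    constructor
    · intro i m hm
      rw [hprod]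
      induction i using Fin.cases with
      | zero =>
        have hnot : ∀ j : Fin l, m ∉ S j.succ := fun j hj =>
          (Finset.disjoint_left.mp (hdisj 0 j.succ (Fin.succ_ne_zero j).symm) hm) hj
        exact ihspec.2 m hnot
      | succ j =>
        have h1 : (List.ofFn (fun j : Fin l => E j.succ)).reverse.prod (E 0 x) m
            = E j.succ (E 0 x) m := ihspec.1 j m hm
        have h2 : ∀ m' ∈ S j.succ, (E 0 x) m' = x m' := by
          intro m' hm'
          exact hfix 0 x m' (Finset.disjoint_left.mp
            (hdisj j.succ 0 (Fin.succ_ne_zero j)) hm')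
        rw [h1]
        exact hdep j.succ (E 0 x) x h2 m hm
    · intro m hm
      rw [hprod, ihspec.2 m (fun j => hm j.succ)]
      exact hfix 0 x m (hm 0)

lemma prod_fix_iff {n l : ℕ} (E : Fin l → Equiv.Perm (Fin n → Bool))
    (S : Fin l → Finset (Fin n))
    (hdisj : ∀ i j, i ≠ j → Disjoint (S i) (S j))
    (hfix : ∀ i, ∀ x : Fin n → Bool, ∀ m ∉ S i, E i x m = x m)
    (hdep : ∀ i, ∀ x y : Fin n → Bool, (∀ m ∈ S i, x m = y m) → ∀ m ∈ S i, E i x m = E i y m)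
    (x : Fin n → Bool) :
    (List.ofFn E).reverse.prod x = x ↔ ∀ i, E i x = x := by
  obtain ⟨h1, h2⟩ := prod_parts l E S hdisj hfix hdep x
  constructor
  · intro h i
    funext m
    by_cases hm : m ∈ S i
    · rw [← h1 i m hm, h]
    · exact hfix i x m hm
  · intro h
    funext m
    by_cases hm : ∃ i, m ∈ S i
    · obtain ⟨i, hi⟩ := hm
      rw [h1 i m hi, h i]
    · push_neg at hm
      exact h2 m hm
lemma count_bound {n k : ℕ} : ∀ (l : ℕ) (E : Fin l → Equiv.Perm (Fin n → Bool))
    (S : Fin l → Finset (Fin n))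
    (_ : ∀ i, (S i).card = k)
    (_ : ∀ i j, i ≠ j → Disjoint (S i) (S j))
    (_ : ∀ i, ∀ x : Fin n → Bool, ∀ m ∉ S i, E i x m = x m)
    (_ : ∀ i, ∀ x y : Fin n → Bool, (∀ m ∈ S i, x m = y m) → ∀ m ∈ S i, E i x m = E i y m)
    (_ : ∀ i, E i ≠ 1),
    ((Finset.univ.filter fun x : Fin n → Bool => ∀ i, E i x = x).card : ℝ) ≤
      (1 - ((2 : ℝ) ^ (k - 1))⁻¹) ^ l * 2 ^ n := by
  have hc1 : ((2 : ℝ) ^ (k - 1))⁻¹ ≤ 1 := by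
    rw [inv_le_one_iff₀]
    right
    exact one_le_pow₀ (by norm_num)
  have hc0 : (0:ℝ) ≤ 1 - ((2 : ℝ) ^ (k - 1))⁻¹ := by linarith
  intro l
  induction l with
  | zero =>
    intro E S hk hdisj hfix hdep hne
    simp [Finset.card_univ]
  | succ l ih =>
    intro E S hk hdisj hfix hdep hne
    set c : ℝ := 1 - ((2 : ℝ) ^ (k - 1))⁻¹ with hc
    set A : Finset (Fin n → Bool) := Finset.univ.filter fun x => E 0 x = x with hA
    set C : Finset (Fin n → Bool) := Finset.univ.filter fun x => ∀ j : Fin l, E j.succ x = x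
      with hC
    have hsplitset : (Finset.univ.filter fun x : Fin n → Bool => ∀ i, E i x = x) = A ∩ C := by
      ext x
      simp only [hA, hC, Finset.mem_inter, Finset.mem_filter, Finset.mem_univ, true_and]
      exact Fin.forall_fin_succ
    set T : Finset (Fin n) := Finset.univ.biUnion (fun j : Fin l => S j.succ) with hT
    have hdisjT : Disjoint (S 0) T := by
      rw [hT, Finset.disjoint_biUnion_right]
      intro j _
      exact hdisj 0 j.succ (Fin.succ_ne_zero j).symm
    -- determinedness
    have hdetA : ∀ x ∈ A, ∀ y : Fin n → Bool, (∀ m ∈ S 0, y m = x m) → y ∈ A := by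
      intro x hx y hy
      simp only [hA, Finset.mem_filter, Finset.mem_univ, true_and] at hx ⊢
      funext m
      by_cases hm : m ∈ S 0
      · rw [hdep 0 y x hy m hm, hx, hy m hm]
      · exact hfix 0 y m hm
    have hdetC : ∀ x ∈ C, ∀ y : Fin n → Bool, (∀ m ∈ T, y m = x m) → y ∈ C := by
      intro x hx y hy
      simp only [hC, Finset.mem_filter, Finset.mem_univ, true_and] at hx ⊢
      intro j
      funext m
      by_cases hm : m ∈ S j.succ
      · have hyT : ∀ m' ∈ S j.succ, y m' = x m' := fun m' hm' =>
          hy m' (Finset.mem_biUnion.mpr ⟨j, Finset.mem_univ j, hm'⟩)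
        rw [hdep j.succ y x hyT m hm, hx j, hyT m hm]
      · exact hfix j.succ y m hm
    have hkey := indep_card A C (S 0) T hdisjT hdetA hdetC
    have hAbound : (A.card : ℝ) ≤ c * 2 ^ n :=
      single_bound (E 0) (S 0) (hk 0) (hfix 0) (hdep 0) (hne 0)
    have hCbound : (C.card : ℝ) ≤ c ^ l * 2 ^ n :=
      ih (fun j => E j.succ) (fun j => S j.succ) (fun j => hk j.succ)
        (fun i j hij => hdisj i.succ j.succ (fun h => hij (Fin.succ_injective _ h)))
        (fun i => hfix i.succ) (fun i => hdep i.succ) (fun i => hne i.succ)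
    rw [hsplitset]
    have hkeyR : ((A ∩ C).card : ℝ) * 2 ^ n = (A.card : ℝ) * C.card := by
      exact_mod_cast hkey
    have h2n : (0:ℝ) < 2 ^ n := by positivity
    rw [← mul_le_mul_iff_of_pos_right h2n, hkeyR]
    calc (A.card : ℝ) * C.card ≤ (c * 2 ^ n) * (c ^ l * 2 ^ n) := by
          apply mul_le_mul hAbound hCbound (by positivity) (by positivity)
    _ = c ^ (l + 1) * 2 ^ n * 2 ^ n := by ring

theorem stmt_12 (n l k : ℕ) (E : Fin l → Equiv.Perm (Fin n → Bool))
    (S : Fin l → Finset (Fin n)) (hk : ∀ i, (S i).card = k)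
    (hdisj : ∀ i j, i ≠ j → Disjoint (S i) (S j))
    (hfix : ∀ i, ∀ x : Fin n → Bool, ∀ m ∉ S i, E i x m = x m)
    (hdep : ∀ i, ∀ x y : Fin n → Bool, (∀ m ∈ S i, x m = y m) → ∀ m ∈ S i, E i x m = E i y m)
    (hne : ∀ i, E i ≠ 1) :
    1 - (1 - ((2 : ℝ) ^ (k - 1))⁻¹) ^ l ≤
      ((Finset.univ.filter fun x => (List.ofFn E).reverse.prod x ≠ x).card : ℝ) / 2 ^ n := by
  set c : ℝ := 1 - ((2 : ℝ) ^ (k - 1))⁻¹ with hc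
  have hfilter_eq : (Finset.univ.filter fun x : Fin n → Bool => (List.ofFn E).reverse.prod x = x)
      = Finset.univ.filter fun x : Fin n → Bool => ∀ i, E i x = x := by
    apply Finset.filter_congr
    intro x _
    exact prod_fix_iff E S hdisj hfix hdep x
  have hbound := count_bound l E S hk hdisj hfix hdep hne
  rw [← hfilter_eq] at hbound
  have hsplit : (Finset.univ.filter fun x : Fin n → Bool => (List.ofFn E).reverse.prod x = x).card
      + (Finset.univ.filter fun x : Fin n → Bool => (List.ofFn E).reverse.prod x ≠ x).card
      = 2 ^ n := by
    rw [Finset.card_filter_add_card_filter_not]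
    simp [Finset.card_univ]
  have hsplitR : ((Finset.univ.filter fun x : Fin n → Bool =>
        (List.ofFn E).reverse.prod x = x).card : ℝ)
      + ((Finset.univ.filter fun x : Fin n → Bool =>
        (List.ofFn E).reverse.prod x ≠ x).card : ℝ) = 2 ^ n := by
    exact_mod_cast hsplit
  have h2n : (0:ℝ) < 2 ^ n := by positivity
  rw [le_div_iff₀ h2n, sub_mul, one_mul]
  linarith
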